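/- For a planar tree T, for any p and any k with m_T(p) ≤ k ≤ m_T(p+1) − 1, the contour process satisfies H_T(p+1) − 1 ≤ C_T(k) ≤ H_T(p), where C_T(k) = |c_T(k)| is the height of the k-th vertex visited by the depth-first traversal and m_T(p) is the first visit time of the p-th vertex (in lexicographic order). -/

import Mathlib

/-- A rooted planar tree: a finite, prefix-closed set of words on `ℕ` containing the
empty word, closed under taking smaller siblings. -/
def IsPlanarTree (T : Finset (List ℕ)) : Prop :=
  ([] ∈ T) ∧
  (∀ u ∈ T, ∀ v : List ℕ, v <+: u → v ∈ T) ∧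
  (∀ (u : List ℕ) (i : ℕ), u ++ [i] ∈ T → ∀ j < i, u ++ [j] ∈ T)

/-- The `k`-th vertex of `T` in lexicographic order. -/
noncomputable def vtx (T : Finset (List ℕ)) (k : ℕ) : List ℕ :=
  (T.sort (· ≤ ·)).getD k []

/-- The height sequence: `HT T k` is the depth of the `k`-th vertex in lex. order. -/
noncomputable def HT (T : Finset (List ℕ)) (k : ℕ) : ℕ := (vtx T k).length

/-- `c : ℕ → List ℕ` is the depth-first traversal of `T`: it starts at the root; from
the current vertex it moves to the lexicographically smallest unvisited child if any,
and otherwise back to the parent. -/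
def IsDFS (T : Finset (List ℕ)) (c : ℕ → List ℕ) : Prop :=
  c 0 = [] ∧
  ∀ j : ℕ, j < 2 * (T.card - 1) →
    (((∃ v ∈ T, (∃ i : ℕ, v = c j ++ [i]) ∧ ∀ i ≤ j, c i ≠ v) →
        (c (j+1) ∈ T ∧ (∃ i : ℕ, c (j+1) = c j ++ [i]) ∧ (∀ i ≤ j, c i ≠ c (j+1)) ∧
          ∀ v ∈ T, (∃ i : ℕ, v = c j ++ [i]) → (∀ i ≤ j, c i ≠ v) → c (j+1) ≤ v)) ∧
     ((¬ ∃ v ∈ T, (∃ i : ℕ, v = c j ++ [i]) ∧ ∀ i ≤ j, c i ≠ v) →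
        c (j+1) = (c j).dropLast))

/-- `mT T c k` : the first visit time of the `k`-th vertex (in lex. order) by the
depth-first traversal `c`. -/
noncomputable def mT (T : Finset (List ℕ)) (c : ℕ → List ℕ) (k : ℕ) : ℕ :=
  sInf {j : ℕ | c j = vtx T k}


namespace ContourAux


lemma nil_le' (l : List ℕ) : [] ≤ l := by
  cases l with
  | nil => exact le_rfl
  | cons a l => exact le_of_lt List.Lex.nil

lemma le_append (u t : List ℕ) : u ≤ u ++ t := by
  induction u with
  | nil => exact (nil_le' _)
  | cons a u ih => exact List.cons_le_cons a ih

lemma prefix_le {u v : List ℕ} (h : u <+: v) : u ≤ v := by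
  obtain ⟨t, rfl⟩ := h; exact le_append u t

lemma eq_nil_of_le_nil {l : List ℕ} (h : l ≤ []) : l = [] :=
  le_antisymm h (nil_le' _)

lemma append_lt (q : List ℕ) {a b : ℕ} (r r' : List ℕ) (h : a < b) :
    q ++ a :: r < q ++ b :: r' :=
  List.Lex.append_left _ (List.Lex.rel h) q

lemma lt_cons_cases {a b : ℕ} {l l' : List ℕ} (h : a :: l < b :: l') :
    a < b ∨ (a = b ∧ l < l') := by
  have h' : List.Lex (· < ·) (a :: l) (b :: l') := h
  cases h' with
  | rel h => exact Or.inl h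
  | cons h => exact Or.inr ⟨rfl, h⟩

lemma prefix_eq_of_length {q r x : List ℕ} (h1 : q <+: x) (h2 : r <+: x)
    (h3 : q.length = r.length) : q = r := by
  rw [List.prefix_iff_eq_take] at h1 h2; rw [h1, h2, h3]

lemma prefix_of_le_of_lt : ∀ {q m w : List ℕ}, q <+: w → q ≤ m → m < w → q <+: m := by
  intro q
  induction q with
  | nil => intro m w _ _ _; exact List.nil_prefix
  | cons a q ih =>
    intro m w hpre hle hlt
    cases m with
    | nil => exact absurd (eq_nil_of_le_nil hle) (by simp)
    | cons b m =>
      cases w with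
      | nil => exact absurd hpre (by simp)
      | cons d w =>
        obtain ⟨rfl, hqw⟩ := List.cons_prefix_cons.mp hpre
        rcases lt_cons_cases hlt with hbd | ⟨rfl, hmw⟩
        · exact absurd (List.Lex.rel hbd : (b::m) < (a::q)) (not_lt.mpr hle)
        · have hq : q ≤ m := by
            by_contra hno
            exact absurd (List.Lex.cons (not_le.mp hno) : (b::m) < (b::q)) (not_lt.mpr hle)
          exact List.cons_prefix_cons.mpr ⟨rfl, ih hqw hq hmw⟩

lemma prefix_lt {u v : List ℕ} (h : u <+: v) (hne : u ≠ v) : u < v := by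
  obtain ⟨t, rfl⟩ := h
  cases t with
  | nil => simp at hne
  | cons a t =>
    have h2 : List.Lex (·<·) (u ++ []) (u ++ a :: t) := List.Lex.append_left (·<·) List.Lex.nil u
    simpa using h2

lemma prefix_antisym {u v : List ℕ} (h1 : u <+: v) (h2 : v <+: u) : u = v :=
  prefix_eq_of_length h1 (List.prefix_refl v) (le_antisymm h1.length_le h2.length_le)

lemma succ_le {T : Finset (List ℕ)} (hT : IsPlanarTree T) {m x v : List ℕ}
    (hxm : x <+: m)
    (hC : ∀ q, x <+: q → q <+: m → q ≠ x → ∀ s, q ++ [s] ∈ T → q ++ [s] ≤ m)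
    (hv : ∃ s, v = x ++ [s]) (hvm : m < v)
    (hmin : ∀ s, x ++ [s] ∈ T → m < x ++ [s] → v ≤ x ++ [s]) :
    ∀ w, w ∈ T → m < w → v ≤ w := by
  suffices H : ∀ n, ∀ w, w.length ≤ n → w ∈ T → m < w → v ≤ w by
    intro w hw hmw; exact H w.length w le_rfl hw hmw
  intro n
  induction n with
  | zero =>
    intro w hlen hw hmw
    rw [Nat.le_zero, List.length_eq_zero_iff] at hlen
    subst hlen
    exact absurd hmw (not_lt.mpr (nil_le' _))
  | succ n ih =>
    intro w hlen hw hmw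
    rcases List.eq_nil_or_concat w with rfl | ⟨q, s, rfl⟩
    · exact absurd hmw (not_lt.mpr (nil_le' _))
    simp only [List.concat_eq_append] at hw hmw hlen ⊢
    have hqw : q <+: q ++ [s] := ⟨[s], rfl⟩
    have hqT : q ∈ T := hT.2.1 _ hw q hqw
    have hqlen : q.length + 1 = (q ++ [s]).length := by simp
    by_cases hmq : m < q
    · exact (ih q (by omega) hqT hmq).trans (prefix_le hqw)
    · have hqm : q ≤ m := not_lt.mp hmq
      have hqprefm : q <+: m := prefix_of_le_of_lt hqw hqm hmw
      by_cases hqeq : q = m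
      · -- w = q ++ [s] is a child of m
        subst hqeq
        by_cases hxq : x = q
        · subst hxq; exact hmin s hw hmw
        · exact absurd hmw
            (not_lt.mpr (hC q hxm (List.prefix_refl q) (fun h => hxq h.symm) s hw))
      · -- q is a strict prefix of m : m = q ++ t :: r
        obtain ⟨r0, hr0⟩ := hqprefm
        have hr0ne : r0 ≠ [] := by rintro rfl; exact hqeq (by simpa using hr0)
        obtain ⟨t, r, rfl⟩ : ∃ t r, r0 = t :: r := by
          cases r0 with
          | nil => exact absurd rfl hr0ne
          | cons t r => exact ⟨t, r, rfl⟩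
        have hqprefm : q <+: m := ⟨t :: r, hr0⟩
        have hts : t < s := by
          by_contra hno
          have hst : s ≤ t := not_lt.mp hno
          have hle : q ++ [s] ≤ m := by
            rcases eq_or_lt_of_le hst with rfl | hlt
            · rw [← hr0]; exact prefix_le ⟨r, by simp⟩
            · rw [← hr0]; exact le_of_lt (append_lt q _ _ hlt)
          exact absurd hmw (not_lt.mpr hle)
        have ht1T : q ++ [t+1] ∈ T := by
          rcases eq_or_lt_of_le (Nat.succ_le_of_lt hts) with heq | hlt
          · have : s = t + 1 := by omega
            rw [← this]; exact hw
          · exact hT.2.2 q s hw (t+1) hlt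
        have ht1m : m < q ++ [t+1] := by
          rw [← hr0]; exact append_lt q _ _ (Nat.lt_succ_self t)
        have ht1w : q ++ [t+1] ≤ q ++ [s] := by
          rcases eq_or_lt_of_le (Nat.succ_le_of_lt hts) with heq | hlt
          · have : s = t + 1 := by omega
            rw [← this]
          · exact le_of_lt (append_lt q _ _ hlt)
        by_cases hqx : q = x
        · subst hqx; exact (hmin (t+1) ht1T ht1m).trans ht1w
        · rcases List.prefix_or_prefix_of_prefix hqprefm hxm with hqx' | hxq'
          · -- q <+: x strictly; x = q ++ t' :: r1' with t' = t
            obtain ⟨r1, hr1⟩ := hqx'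
            have hr1ne : r1 ≠ [] := by rintro rfl; exact hqx (by simpa using hr1)
            obtain ⟨t', r1', rfl⟩ : ∃ t' r1', r1 = t' :: r1' := by
              cases r1 with
              | nil => exact absurd rfl hr1ne
              | cons t' r1' => exact ⟨t', r1', rfl⟩
            have htt : t' = t := by
              have hx2 : q ++ t' :: r1' <+: q ++ t :: r := by
                rw [hr1, hr0]; exact hxm
              have := (List.prefix_append_right_inj q).mp hx2
              exact (List.cons_prefix_cons.mp this).1
            obtain ⟨sv, hsv⟩ := hv
            have hvlt : v < q ++ [t+1] := by
              rw [hsv, ← hr1, htt]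
              have he : (q ++ t :: r1') ++ [sv] = q ++ t :: (r1' ++ [sv]) := by simp
              rw [he]
              exact append_lt q _ _ (Nat.lt_succ_self t)
            exact le_of_lt (hvlt.trans_le ht1w)
          · exact absurd ht1m
              (not_lt.mpr (hC q hxq' hqprefm (fun h => hqx h) (t+1) ht1T))

lemma all_le_of_root_done {T : Finset (List ℕ)} (hT : IsPlanarTree T) {m : List ℕ}
    (hC : ∀ q, q <+: m → q ≠ [] → ∀ s, q ++ [s] ∈ T → q ++ [s] ≤ m)
    (hroot : ∀ s : ℕ, [s] ∈ T → ([s] : List ℕ) ≤ m) :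
    ∀ w ∈ T, w ≤ m := by
  suffices H : ∀ n, ∀ w, w.length ≤ n → w ∈ T → w ≤ m by
    intro w hw; exact H w.length w le_rfl hw
  intro n
  induction n with
  | zero =>
    intro w hlen _
    rw [Nat.le_zero, List.length_eq_zero_iff] at hlen
    subst hlen; exact (nil_le' _)
  | succ n ih =>
    intro w hlen hw
    by_contra hno
    have hmw : m < w := not_le.mp hno
    rcases List.eq_nil_or_concat w with rfl | ⟨q, s, rfl⟩
    · exact absurd hmw (not_lt.mpr (nil_le' _))
    simp only [List.concat_eq_append] at hw hmw hlen
    have hqw : q <+: q ++ [s] := ⟨[s], rfl⟩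
    have hqT : q ∈ T := hT.2.1 _ hw q hqw
    have hqlen : q.length + 1 = (q ++ [s]).length := by simp
    have hqm : q ≤ m := ih q (by omega) hqT
    have hqprefm : q <+: m := prefix_of_le_of_lt hqw hqm hmw
    by_cases hqnil : q = []
    · subst hqnil
      exact absurd hmw (not_lt.mpr (hroot s (by simpa using hw)))
    · exact absurd hmw (not_lt.mpr (hC q hqprefm hqnil s hw))


def Inv (T : Finset (List ℕ)) (c : ℕ → List ℕ) (j : ℕ) : Prop :=
  ∃ m, m ∈ T ∧ (∀ i, i ≤ j → c i ∈ T ∧ c i ≤ m) ∧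
    (∀ w ∈ T, w ≤ m → ∃ i, i ≤ j ∧ c i = w) ∧
    c j <+: m ∧
    (∀ q, c j <+: q → q <+: m → q ≠ c j → ∀ s, q ++ [s] ∈ T → q ++ [s] ≤ m) ∧
    (j + (c j).length = 2 * ((T.filter (fun w => w ≤ m)).card - 1) ∨ ∀ w ∈ T, w ≤ m)

lemma inv_all {T : Finset (List ℕ)} {c : ℕ → List ℕ}
    (hT : IsPlanarTree T) (hc : IsDFS T c) :
    ∀ j, j ≤ 2 * (T.card - 1) → Inv T c j := by
  intro j
  induction j with
  | zero =>
    intro _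
    refine ⟨[], hT.1, ?_, ?_, ?_, ?_, ?_⟩
    · intro i hi
      rw [Nat.le_zero] at hi; subst hi
      rw [hc.1]; exact ⟨hT.1, le_rfl⟩
    · intro w hw hwle
      exact ⟨0, le_rfl, by rw [hc.1, eq_nil_of_le_nil hwle]⟩
    · rw [hc.1]
    · intro q hq1 hq2 hq3
      rw [List.prefix_nil] at hq2
      rw [hc.1] at hq3
      exact absurd hq2 hq3
    · left
      rw [hc.1]
      have hfe : T.filter (fun w => w ≤ ([] : List ℕ)) = {[]} := by
        ext w
        simp only [Finset.mem_filter, Finset.mem_singleton]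
        constructor
        · rintro ⟨-, h⟩; exact eq_nil_of_le_nil h
        · rintro rfl; exact ⟨hT.1, le_rfl⟩
      rw [hfe]
      simp
  | succ j ihj =>
    intro hj1
    have hj : j < 2 * (T.card - 1) := by omega
    obtain ⟨m, hm, ha1, ha2, hb, hC, he⟩ := ihj (by omega)
    by_cases hex : ∃ v ∈ T, (∃ i : ℕ, v = c j ++ [i]) ∧ ∀ i ≤ j, c i ≠ v
    · -- down step
      obtain ⟨hvT, hvch, hunv, hminsp⟩ := (hc.2 j hj).1 hex
      have hvm : m < c (j+1) := by
        by_contra hno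
        obtain ⟨i, hij, hci⟩ := ha2 _ hvT (not_lt.mp hno)
        exact hunv i hij hci
      have hmin : ∀ s, c j ++ [s] ∈ T → m < c j ++ [s] → c (j+1) ≤ c j ++ [s] := by
        intro s hsT hms
        refine hminsp _ hsT ⟨s, rfl⟩ ?_
        intro i hi heq
        exact absurd (heq ▸ (ha1 i hi).2) (not_le.mpr hms)
      have hsucc := succ_le hT hb hC hvch hvm hmin
      refine ⟨c (j+1), hvT, ?_, ?_, List.prefix_refl _, ?_, ?_⟩
      · intro i hi
        rcases Nat.lt_or_ge i (j+1) with h | h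
        · exact ⟨(ha1 i (by omega)).1, le_trans (ha1 i (by omega)).2 (le_of_lt hvm)⟩
        · have hieq : i = j + 1 := by omega
          subst hieq; exact ⟨hvT, le_rfl⟩
      · intro w hw hwv
        by_cases hwm : w ≤ m
        · obtain ⟨i, hij, hci⟩ := ha2 w hw hwm
          exact ⟨i, by omega, hci⟩
        · exact ⟨j+1, le_rfl, le_antisymm (hsucc w hw (not_le.mp hwm)) hwv⟩
      · intro q hq1 hq2 hq3 s hsT
        exact absurd (prefix_antisym hq2 hq1) hq3
      · left
        rcases he with he | he
        · have hfe : T.filter (fun w => w ≤ c (j+1)) =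
              insert (c (j+1)) (T.filter (fun w => w ≤ m)) := by
            ext w
            simp only [Finset.mem_filter, Finset.mem_insert]
            constructor
            · rintro ⟨hw, hwv⟩
              by_cases hwm : w ≤ m
              · exact Or.inr ⟨hw, hwm⟩
              · exact Or.inl (le_antisymm hwv (hsucc w hw (not_le.mp hwm)))
            · rintro (rfl | ⟨hw, hwm⟩)
              · exact ⟨hvT, le_rfl⟩
              · exact ⟨hw, hwm.trans (le_of_lt hvm)⟩
          have hvnot : c (j+1) ∉ T.filter (fun w => w ≤ m) := by
            simp only [Finset.mem_filter]
            rintro ⟨-, h⟩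
            exact absurd h (not_le.mpr hvm)
          rw [hfe, Finset.card_insert_of_notMem hvnot]
          obtain ⟨i0, hi0⟩ := hvch
          have hlen : (c (j+1)).length = (c j).length + 1 := by rw [hi0]; simp
          have hpos : 0 < (T.filter (fun w => w ≤ m)).card :=
            Finset.card_pos.mpr ⟨[], Finset.mem_filter.mpr ⟨hT.1, (nil_le' _)⟩⟩
          omega
        · exact absurd (he _ hvT) (not_le.mpr hvm)
    · -- up step
      have hup : c (j+1) = (c j).dropLast := (hc.2 j hj).2 hex
      push_neg at hex
      have hcjT : c j ∈ T := (ha1 j le_rfl).1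
      have hdT : (c j).dropLast ∈ T := hT.2.1 _ hcjT _ (List.dropLast_prefix _)
      have hbd : c (j+1) <+: m := by
        rw [hup]; exact (List.dropLast_prefix _).trans hb
      have hchild : ∀ s, c j ++ [s] ∈ T → c j ++ [s] ≤ m := by
        intro s hsT
        obtain ⟨i, hij, hci⟩ := hex _ hsT ⟨s, rfl⟩
        exact hci ▸ (ha1 i hij).2
      refine ⟨m, hm, ?_, ?_, hbd, ?_, ?_⟩
      · intro i hi
        rcases Nat.lt_or_ge i (j+1) with h | h
        · exact ha1 i (by omega)
        · have hieq : i = j + 1 := by omega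
          subst hieq
          rw [hup]
          exact ⟨hdT, prefix_le ((List.dropLast_prefix _).trans hb)⟩
      · intro w hw hwm
        obtain ⟨i, hij, hci⟩ := ha2 w hw hwm
        exact ⟨i, by omega, hci⟩
      · intro q hq1 hq2 hq3 s hsT
        rw [hup] at hq1 hq3
        by_cases hqc : q = c j
        · subst hqc; exact hchild s hsT
        · rcases List.prefix_or_prefix_of_prefix hq2 hb with hq4 | hq4
          · exfalso
            apply hq3
            have hlt : q.length < (c j).length := by
              rcases eq_or_lt_of_le hq4.length_le with heq | h
              · exact absurd (prefix_eq_of_length hq4 (List.prefix_refl _) heq) hqc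
              · exact h
            have hge : (c j).length - 1 ≤ q.length := by
              have h5 := hq1.length_le
              rw [List.length_dropLast] at h5
              exact h5
            exact prefix_eq_of_length hq4 (List.dropLast_prefix (c j))
              (by rw [List.length_dropLast]; omega)
          · exact hC q hq4 hq2 hqc s hsT
      · by_cases hcj : c j = []
        · right
          rw [hcj] at hC hchild
          refine all_le_of_root_done hT (fun q hq1 hq2 s hsT => ?_) (fun s hsT => ?_)
          · exact hC q (List.nil_prefix) hq1 hq2 s hsT
          · simpa using hchild s (by simpa using hsT)
        · rcases he with he | he
          · left
            rw [hup, List.length_dropLast]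
            have hl : 1 ≤ (c j).length := List.length_pos_iff.mpr hcj
            omega
          · right; exact he

lemma visited_all {T : Finset (List ℕ)} {c : ℕ → List ℕ}
    (hT : IsPlanarTree T) (hc : IsDFS T c) (hcard : 2 ≤ T.card) :
    ∀ w ∈ T, ∃ i, i ≤ 2 * (T.card - 1) ∧ c i = w := by
  obtain ⟨m, hm, ha1, ha2, hb, hC, he⟩ := inv_all hT hc (2 * (T.card - 1)) le_rfl
  have hall : ∀ w ∈ T, w ≤ m := by
    rcases he with he | he
    · have hn1 : 1 ≤ (T.filter (fun w => w ≤ m)).card :=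
        Finset.card_pos.mpr ⟨[], Finset.mem_filter.mpr ⟨hT.1, (nil_le' _)⟩⟩
      have hnN : (T.filter (fun w => w ≤ m)).card ≤ T.card :=
        Finset.card_filter_le _ _
      have hfe : T.filter (fun w => w ≤ m) = T :=
        Finset.eq_of_subset_of_card_le (Finset.filter_subset _ _) (by omega)
      intro w hw
      have hw2 : w ∈ T.filter (fun w => w ≤ m) := by rw [hfe]; exact hw
      exact (Finset.mem_filter.mp hw2).2
    · exact he
  intro w hw
  exact ha2 w hw (hall w hw)


lemma vtx_eq_get (T : Finset (List ℕ)) {q : ℕ} (hq : q < T.card) :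
    vtx T q = (T.sort (· ≤ ·))[q]'(by rw [Finset.length_sort]; exact hq) := by
  unfold vtx
  exact List.getD_eq_getElem _ _ _

lemma vtx_mem (T : Finset (List ℕ)) {q : ℕ} (hq : q < T.card) : vtx T q ∈ T := by
  rw [vtx_eq_get T hq]
  exact (Finset.mem_sort _).mp (List.getElem_mem _)

lemma sort_lt_sort (T : Finset (List ℕ)) {q r : ℕ} (hqr : q < r)
    (hr : r < (T.sort (· ≤ ·)).length) :
    (T.sort (· ≤ ·))[q]'(by omega) < (T.sort (· ≤ ·))[r]'hr := by
  have hs := Finset.sortedLT_sort T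
  have h2 := List.SortedLT.strictMono_get hs
    (show (⟨q, by omega⟩ : Fin _) < ⟨r, hr⟩ from hqr)
  simpa [List.get_eq_getElem] using h2

lemma vtx_lt_vtx (T : Finset (List ℕ)) {q r : ℕ} (hqr : q < r) (hr : r < T.card) :
    vtx T q < vtx T r := by
  rw [vtx_eq_get T (lt_trans hqr hr), vtx_eq_get T hr]
  exact sort_lt_sort T hqr (by rw [Finset.length_sort]; exact hr)

lemma vtx_consec (T : Finset (List ℕ)) {p : ℕ} (hp : p + 1 < T.card) {w : List ℕ}
    (hw : w ∈ T) (hlt : vtx T p < w) : vtx T (p+1) ≤ w := by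
  have hw' : w ∈ T.sort (· ≤ ·) := (Finset.mem_sort _).mpr hw
  obtain ⟨n, hn, rfl⟩ := List.mem_iff_getElem.mp hw'
  have hlen : (T.sort (· ≤ ·)).length = T.card := Finset.length_sort _
  rw [vtx_eq_get T (by omega : p < T.card)] at hlt
  rw [vtx_eq_get T hp]
  rcases Nat.lt_or_ge n (p+1) with h | h
  · exfalso
    rcases eq_or_lt_of_le (Nat.lt_succ_iff.mp h) with heq | h2
    · subst heq; exact absurd hlt (lt_irrefl _)
    · exact absurd (hlt.trans (sort_lt_sort T h2 (by omega))) (lt_irrefl _)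
  · rcases eq_or_lt_of_le h with heq | h2
    · subst heq; exact le_rfl
    · exact le_of_lt (sort_lt_sort T h2 hn)

end ContourAux

/-- for a planar tree `T`, its depth-first traversal `c` and any `p`, for
`m_T(p) ≤ k ≤ m_T(p+1) - 1` the contour process `C_T(k) = |c(k)|` satisfies
`H_T(p+1) - 1 ≤ C_T(k) ≤ H_T(p)`. -/
theorem contour_between_visits (T : Finset (List ℕ)) (hT : IsPlanarTree T)
    (c : ℕ → List ℕ) (hc : IsDFS T c) (p k : ℕ) (hp : p + 1 ≤ T.card - 1)
    (hk1 : mT T c p ≤ k) (hk2 : k < mT T c (p+1)) :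
    HT T (p+1) ≤ (c k).length + 1 ∧ (c k).length ≤ HT T p := by
  classical
  have hN2 : 2 ≤ T.card := by omega
  have hpc : p + 1 < T.card := by omega
  have hvT : vtx T p ∈ T := ContourAux.vtx_mem T (by omega)
  have hv1T : vtx T (p+1) ∈ T := ContourAux.vtx_mem T hpc
  have hvlt : vtx T p < vtx T (p+1) := ContourAux.vtx_lt_vtx T (Nat.lt_succ_self p) hpc
  obtain ⟨i1, hi1J, hi1⟩ := ContourAux.visited_all hT hc hN2 _ hv1T
  have hj1 : c (mT T c (p+1)) = vtx T (p+1) :=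
    Nat.sInf_mem (⟨i1, hi1⟩ : {j : ℕ | c j = vtx T (p+1)}.Nonempty)
  have hj1J : mT T c (p+1) ≤ 2*(T.card-1) :=
    le_trans (Nat.sInf_le (show i1 ∈ {j : ℕ | c j = vtx T (p+1)} from hi1)) hi1J
  obtain ⟨i0, hi0J, hi0⟩ := ContourAux.visited_all hT hc hN2 _ hvT
  have hj0 : c (mT T c p) = vtx T p :=
    Nat.sInf_mem (⟨i0, hi0⟩ : {j : ℕ | c j = vtx T p}.Nonempty)
  have hnotv : ∀ i, i < mT T c (p+1) → c i ≠ vtx T (p+1) := fun i hi =>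
    Nat.notMem_of_lt_sInf (s := {j : ℕ | c j = vtx T (p+1)}) hi
  have key : ∀ k', mT T c p ≤ k' → k' < mT T c (p+1) →
      c k' <+: vtx T p ∧ (∀ w ∈ T, w ≤ vtx T p → ∃ i, i ≤ k' ∧ c i = w) := by
    intro k' h0 h1
    obtain ⟨m, hm, ha1, ha2, hb, -, -⟩ := ContourAux.inv_all hT hc k' (by omega)
    have hm1 : vtx T p ≤ m := by rw [← hj0]; exact (ha1 _ h0).2
    have hm2 : m < vtx T (p+1) := by
      by_contra hno
      obtain ⟨i, hij, hci⟩ := ha2 _ hv1T (not_lt.mp hno)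
      exact hnotv i (by omega) hci
    have hmeq : m = vtx T p := by
      by_contra hne
      have hlt2 : vtx T p < m := lt_of_le_of_ne hm1 (fun h => hne h.symm)
      exact absurd (ContourAux.vtx_consec T hpc hm hlt2) (not_le.mpr hm2)
    subst hmeq
    exact ⟨hb, fun w hw hwle => ha2 w hw hwle⟩
  have upper : (c k).length ≤ HT T p := (key k hk1 hk2).1.length_le
  have steps_up : ∀ k', mT T c p ≤ k' → k' + 1 < mT T c (p+1) →
      c (k'+1) = (c k').dropLast := by
    intro k' h0 h1
    have hk'J : k' < 2*(T.card - 1) := by omega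
    rcases Classical.em
        (∃ v ∈ T, (∃ i : ℕ, v = c k' ++ [i]) ∧ ∀ i ≤ k', c i ≠ v) with hex | hex
    · exfalso
      obtain ⟨hvT', ⟨i, hi⟩, hunv, -⟩ := (hc.2 k' hk'J).1 hex
      have hpre := (key (k'+1) (by omega) h1).1
      obtain ⟨i2, hi2, hci2⟩ :=
        (key k' h0 (by omega)).2 _ hvT' (ContourAux.prefix_le hpre)
      exact hunv i2 hi2 hci2
    · exact (hc.2 k' hk'J).2 hex
  have hj1pos : 1 ≤ mT T c (p+1) := by omega
  set e := mT T c (p+1) - 1 with hedef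
  have he1 : e + 1 = mT T c (p+1) := by omega
  have heJ : e < 2*(T.card-1) := by omega
  have hdown : (c (e+1)).length = (c e).length + 1 := by
    rcases Classical.em
        (∃ v ∈ T, (∃ i : ℕ, v = c e ++ [i]) ∧ ∀ i ≤ e, c i ≠ v) with hex | hex
    · obtain ⟨-, ⟨i, hi⟩, -, -⟩ := (hc.2 e heJ).1 hex
      rw [hi]; simp
    · exfalso
      have hup := (hc.2 e heJ).2 hex
      have hpre : c e <+: vtx T p := (key e (by omega) (by omega)).1
      have hpre2 : c (e+1) <+: vtx T p := by
        rw [hup]; exact (List.dropLast_prefix _).trans hpre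
      rw [he1, hj1] at hpre2
      exact absurd (ContourAux.prefix_le hpre2) (not_le.mpr hvlt)
  have hHT : HT T (p+1) = (c e).length + 1 := by
    have h2 : vtx T (p+1) = c (e+1) := by rw [he1, hj1]
    unfold HT
    rw [h2, hdown]
  have hmono : ∀ d, k + d ≤ e → (c (k+d)).length ≤ (c k).length := by
    intro d
    induction d with
    | zero => intro _; exact le_rfl
    | succ d ihd =>
      intro hd
      have h1 : k + d ≤ e := by omega
      have h3 := steps_up (k+d) (by omega) (by omega)
      calc (c (k+(d+1))).length = (c (k+d)).dropLast.length := by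
            rw [show k+(d+1) = (k+d)+1 by omega, h3]
        _ ≤ (c (k+d)).length := by rw [List.length_dropLast]; omega
        _ ≤ (c k).length := ihd h1
  refine ⟨?_, upper⟩
  have hke : k ≤ e := by omega
  have h4 := hmono (e - k) (by omega)
  rw [show k + (e-k) = e by omega] at h4
  omega
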